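/- Let H be an r-uniform multi-hypergraph (r ≥ 2) on a finite vertex set V, and consider a random orientation of its edges. For any two distinct vertices v₁, v₂ ∈ V, the indicator random variables I_{v₁}, I_{v₂} of the events that v₁, respectively v₂, have nonzero in-degree are negatively correlated: E[I_{v₁}·I_{v₂}] ≤ E[I_{v₁}]·E[I_{v₂}]. -/

import Mathlib

open Finset

/-- The indicator (as a real number) of the event that vertex `v` has nonzero
in-degree under the orientation `f` of the edges `E`. -/
noncomputable def indNonzeroIndeg {V : Type*} [DecidableEq V] {m : ℕ}
    {E : Fin m → Finset V} (v : V) (f : {f : Fin m → V // ∀ i, f i ∈ E i}) : ℝ :=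
  if ∃ i, f.1 i = v then 1 else 0

section Aux

variable {V : Type*} [Fintype V] [DecidableEq V] {m : ℕ}

/-- Sum over all orientations of a product of per-edge weights equals the product of
per-edge sums (independence). -/
lemma sum_subtype_prod_weights (E : Fin m → Finset V) (w : Fin m → V → ℝ) :
    ∑ f : {f : Fin m → V // ∀ i, f i ∈ E i}, ∏ i, w i (f.1 i)
      = ∏ i, ∑ x ∈ E i, w i x := by
  rw [Finset.prod_univ_sum]
  exact (Finset.sum_subtype (Fintype.piFinset E)
    (fun g => Fintype.mem_piFinset) (fun g => ∏ i, w i (g i))).symm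

/-- Per-vertex weight: 0 at `v`, 1 elsewhere. -/
noncomputable def chiW (v x : V) : ℝ := if x = v then 0 else 1

lemma chiW_nonneg (v x : V) : 0 ≤ chiW v x := by
  unfold chiW; split <;> norm_num

lemma ind_eq_one_sub {E : Fin m → Finset V} (v : V)
    (f : {f : Fin m → V // ∀ i, f i ∈ E i}) :
    indNonzeroIndeg v f = 1 - ∏ i, chiW v (f.1 i) := by
  unfold indNonzeroIndeg chiW
  by_cases h : ∃ i, f.1 i = v
  · obtain ⟨i, hi⟩ := h
    have h0 : (∏ i, (if f.1 i = v then (0:ℝ) else 1)) = 0 :=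
      Finset.prod_eq_zero (Finset.mem_univ i) (if_pos hi)
    rw [if_pos ⟨i, hi⟩, h0]; ring
  · rw [if_neg h, Finset.prod_eq_one fun i _ => if_neg fun hi => h ⟨i, hi⟩]
    ring

lemma sum_chiW {v : V} (s : Finset V) :
    ∑ x ∈ s, chiW v x = (s.card : ℝ) - (if v ∈ s then 1 else 0) := by
  unfold chiW
  have : ∀ x ∈ s, (if x = v then (0:ℝ) else 1) = 1 - (if x = v then 1 else 0) := by
    intro x _; split <;> ring
  rw [Finset.sum_congr rfl this, Finset.sum_sub_distrib, Finset.sum_ite_eq' s v (fun _ => (1:ℝ))]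
  simp

lemma sum_chiW_mul {v₁ v₂ : V} (hv : v₁ ≠ v₂) (s : Finset V) :
    ∑ x ∈ s, chiW v₁ x * chiW v₂ x
      = (s.card : ℝ) - (if v₁ ∈ s then 1 else 0) - (if v₂ ∈ s then 1 else 0) := by
  unfold chiW
  have : ∀ x ∈ s, (if x = v₁ then (0:ℝ) else 1) * (if x = v₂ then 0 else 1)
      = 1 - (if x = v₁ then 1 else 0) - (if x = v₂ then 1 else 0) := by
    intro x _
    rcases eq_or_ne x v₁ with h1 | h1 <;> rcases eq_or_ne x v₂ with h2 | h2 <;>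
      simp_all
  rw [Finset.sum_congr rfl this]
  rw [Finset.sum_sub_distrib, Finset.sum_sub_distrib,
    Finset.sum_ite_eq' s v₁ (fun _ => (1:ℝ)), Finset.sum_ite_eq' s v₂ (fun _ => (1:ℝ))]
  simp

end Aux

/-- Let `H` be an `r`-uniform multi-hypergraph with edges `E 0, …, E (m-1)` (each an
`r`-element subset of `V`, `r ≥ 2`), and consider a random orientation of its edges
(each orientation `f` has probability `1 / r ^ m`).  For any two distinct vertices
`v₁ ≠ v₂`, the indicators `I_{v₁}, I_{v₂}` of the events of nonzero in-degree are
negatively correlated: `E[I_{v₁} I_{v₂}] ≤ E[I_{v₁}] E[I_{v₂}]`. -/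
theorem neg_correlated_nonzero_indegree {V : Type*} [Fintype V] [DecidableEq V]
    (m r : ℕ) (hr : 2 ≤ r)
    (E : Fin m → Finset V) (hE : ∀ i, (E i).card = r)
    (v₁ v₂ : V) (hv : v₁ ≠ v₂) :
    (∑ f : {f : Fin m → V // ∀ i, f i ∈ E i},
        ((1 : ℝ) / r ^ m) * (indNonzeroIndeg v₁ f * indNonzeroIndeg v₂ f)) ≤
      (∑ f : {f : Fin m → V // ∀ i, f i ∈ E i},
          ((1 : ℝ) / r ^ m) * indNonzeroIndeg v₁ f) *
        (∑ f : {f : Fin m → V // ∀ i, f i ∈ E i},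
            ((1 : ℝ) / r ^ m) * indNonzeroIndeg v₂ f) := by
  have hr0 : (0:ℝ) < (r:ℝ) := by positivity
  have hP : (0:ℝ) < (r:ℝ) ^ m := by positivity
  set p : ℝ := (1:ℝ) / r ^ m with hp
  have hpP : p * (r:ℝ) ^ m = 1 := by rw [hp, one_div, inv_mul_cancel₀ hP.ne']
  -- per-edge quantities
  set a : Fin m → ℝ := fun i => ∑ x ∈ E i, chiW v₁ x with ha
  set b : Fin m → ℝ := fun i => ∑ x ∈ E i, chiW v₂ x with hb
  set c : Fin m → ℝ := fun i => ∑ x ∈ E i, chiW v₁ x * chiW v₂ x with hc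
  -- global sums
  have hN : ∑ f : {f : Fin m → V // ∀ i, f i ∈ E i}, (1:ℝ) = (r:ℝ) ^ m := by
    have := sum_subtype_prod_weights E (fun _ _ => (1:ℝ))
    simpa [hE] using this
  have hA : ∑ f : {f : Fin m → V // ∀ i, f i ∈ E i}, (∏ i, chiW v₁ (f.1 i)) = ∏ i, a i :=
    sum_subtype_prod_weights E _
  have hB : ∑ f : {f : Fin m → V // ∀ i, f i ∈ E i}, (∏ i, chiW v₂ (f.1 i)) = ∏ i, b i :=
    sum_subtype_prod_weights E _
  have hC : ∑ f : {f : Fin m → V // ∀ i, f i ∈ E i},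
      ((∏ i, chiW v₁ (f.1 i)) * ∏ i, chiW v₂ (f.1 i)) = ∏ i, c i := by
    rw [← sum_subtype_prod_weights E (fun i x => chiW v₁ x * chiW v₂ x)]
    exact Finset.sum_congr rfl fun f _ => (Finset.prod_mul_distrib).symm
  -- key product inequality:  ∏ c ≤ p * (∏ a) * (∏ b)
  have key : ∏ i, c i ≤ p * ((∏ i, a i) * ∏ i, b i) := by
    have hstep : ∀ i ∈ (Finset.univ : Finset (Fin m)), c i ≤ a i * b i / r := by
      intro i _
      have hci := sum_chiW_mul hv (E i)
      have hai := sum_chiW (s := E i) (v := v₁)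
      have hbi := sum_chiW (s := E i) (v := v₂)
      rw [hE i] at hci hai hbi
      have hr2 : (2:ℝ) ≤ (r:ℝ) := by exact_mod_cast hr
      rw [ha, hb, hc]; dsimp only
      rw [hci, hai, hbi]
      by_cases h1 : v₁ ∈ E i <;> by_cases h2 : v₂ ∈ E i <;>
        simp only [h1, h2, if_true, if_false] <;>
        rw [le_div_iff₀ hr0] <;> nlinarith
    have hcnn : ∀ i ∈ (Finset.univ : Finset (Fin m)), 0 ≤ c i := by
      intro i _
      exact Finset.sum_nonneg fun x _ => mul_nonneg (chiW_nonneg _ _) (chiW_nonneg _ _)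
    calc ∏ i, c i ≤ ∏ i, (a i * b i / r) := Finset.prod_le_prod hcnn hstep
      _ = p * ((∏ i, a i) * ∏ i, b i) := by
          rw [Finset.prod_div_distrib, Finset.prod_mul_distrib, Finset.prod_const]
          field_simp [hp]
          rw [Finset.card_univ, Fintype.card_fin]
          linear_combination (-((∏ x, a x) * ∏ x, b x)) * hpP
  -- rewrite the three expectations
  simp only [ind_eq_one_sub, ← Finset.mul_sum]
  have expand : ∀ f : {f : Fin m → V // ∀ i, f i ∈ E i},
      (1 - ∏ i, chiW v₁ (f.1 i)) * (1 - ∏ i, chiW v₂ (f.1 i))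
      = 1 - (∏ i, chiW v₁ (f.1 i)) - (∏ i, chiW v₂ (f.1 i))
        + (∏ i, chiW v₁ (f.1 i)) * (∏ i, chiW v₂ (f.1 i)) := fun f => by ring
  rw [Finset.sum_congr rfl fun f _ => expand f]
  simp only [Finset.sum_add_distrib, Finset.sum_sub_distrib]
  rw [hN, hA, hB, hC]
  have hpnn : 0 ≤ p := le_of_lt (by positivity)
  have h1 : p * (∏ i, c i) ≤ p * (p * ((∏ i, a i) * ∏ i, b i)) :=
    mul_le_mul_of_nonneg_left key hpnn
  have hmain : p * ((r:ℝ) ^ m - ∏ i, a i) * (p * ((r:ℝ) ^ m - ∏ i, b i))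
      = p * ((r:ℝ) ^ m - ∏ i, a i - ∏ i, b i) + p * (p * ((∏ i, a i) * ∏ i, b i)) := by
    linear_combination (p * (r:ℝ) ^ m - p * (∏ i, a i) - p * (∏ i, b i)) * hpP
  linarith [h1, hmain]
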